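/- Let X be a random self-adjoint matrix with E X = 0 and ‖X‖ ≤ c a.s. Then for every θ ∈ ℝ, the matrix sum Σ_{k ≥ 2} E[(θX)ᵏ/k!] ⪯ ψ(|θ|)·E X² where ψ(θ) = (e^{θc} − θc − 1)/c²; consequently E exp(θX) ⪯ I + ψ(|θ|)·E X². -/

import Mathlib

open Matrix MeasureTheory
open scoped Matrix.Norms.L2Operator

noncomputable def eN {d : ℕ} (u : Fin d → ℝ) : ℝ :=
  ‖(EuclideanSpace.equiv (Fin d) ℝ).symm u‖

variable {d : ℕ}

lemma eN_nonneg (u : Fin d → ℝ) : 0 ≤ eN u := norm_nonneg _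

lemma abs_dot_le (x y : Fin d → ℝ) : |x ⬝ᵥ y| ≤ eN x * eN y := by
  have h := abs_real_inner_le_norm ((EuclideanSpace.equiv (Fin d) ℝ).symm x)
    ((EuclideanSpace.equiv (Fin d) ℝ).symm y)
  simpa [eN, PiLp.inner_apply, RCLike.inner_apply, dotProduct, mul_comm] using h

lemma eN_sq (x : Fin d → ℝ) : eN x ^ 2 = x ⬝ᵥ x := by
  have h := real_inner_self_eq_norm_sq ((EuclideanSpace.equiv (Fin d) ℝ).symm x)
  rw [eN, ← real_inner_self_eq_norm_sq, PiLp.inner_apply]; simp [dotProduct, sq]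

lemma eN_mulVec (A : Matrix (Fin d) (Fin d) ℝ) (x : Fin d → ℝ) :
    eN (A *ᵥ x) ≤ ‖A‖ * eN x := A.l2_opNorm_mulVec ((EuclideanSpace.equiv (Fin d) ℝ).symm x)

lemma eN_pow_mulVec (A : Matrix (Fin d) (Fin d) ℝ) {c : ℝ} (hc : 0 ≤ c)
    (hA : ‖A‖ ≤ c) (k : ℕ) (x : Fin d → ℝ) :
    eN (A ^ k *ᵥ x) ≤ c ^ k * eN x := by
  induction k generalizing x with
  | zero => simp
  | succ k ih =>
    have h1 : A ^ (k + 1) *ᵥ x = A ^ k *ᵥ (A *ᵥ x) := by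
      rw [pow_succ, ← mulVec_mulVec]
    rw [h1]
    calc eN (A ^ k *ᵥ (A *ᵥ x)) ≤ c ^ k * eN (A *ᵥ x) := ih _
    _ ≤ c ^ k * (c * eN x) := by
        refine mul_le_mul_of_nonneg_left ?_ (by positivity)
        exact (eN_mulVec A x).trans (mul_le_mul_of_nonneg_right hA (eN_nonneg _))
    _ = c ^ (k + 1) * eN x := by ring

lemma dot_herm_sq (A : Matrix (Fin d) (Fin d) ℝ) (hA : A.IsHermitian) (v : Fin d → ℝ) :
    v ⬝ᵥ (A ^ 2 *ᵥ v) = (A *ᵥ v) ⬝ᵥ (A *ᵥ v) := by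
  have hT : Aᵀ = A := by
    have := hA; rwa [IsHermitian, conjTranspose_eq_transpose_of_trivial] at this
  calc v ⬝ᵥ (A ^ 2 *ᵥ v) = v ⬝ᵥ (A *ᵥ (A *ᵥ v)) := by rw [pow_two, mulVec_mulVec]
  _ = (A *ᵥ v) ⬝ᵥ (A *ᵥ v) := by rw [dotProduct_mulVec, ← mulVec_transpose, hT]

lemma qf_pow_bound (A : Matrix (Fin d) (Fin d) ℝ) (hA : A.IsHermitian) {c : ℝ} (hc : 0 ≤ c)
    (hAc : ‖A‖ ≤ c) (θ : ℝ) (k : ℕ) (v : Fin d → ℝ) :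
    v ⬝ᵥ ((θ • A) ^ (k + 2) *ᵥ v) ≤ |θ| ^ (k + 2) * c ^ k * (v ⬝ᵥ (A ^ 2 *ᵥ v)) := by
  have hT : Aᵀ = A := by
    have := hA; rwa [IsHermitian, conjTranspose_eq_transpose_of_trivial] at this
  set u := A *ᵥ v with hu
  have hdl : ∀ x y : Fin d → ℝ, x ⬝ᵥ (A *ᵥ y) = (A *ᵥ x) ⬝ᵥ y := by
    intro x y
    rw [dotProduct_mulVec, ← mulVec_transpose, hT]
  have hmid : v ⬝ᵥ (A ^ (k + 2) *ᵥ v) = u ⬝ᵥ (A ^ k *ᵥ u) := by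
    have hA2 : A ^ (k + 2) = A * (A ^ k * A) := by
      rw [← mul_assoc, ← pow_succ', ← pow_succ]
    calc v ⬝ᵥ (A ^ (k + 2) *ᵥ v) = v ⬝ᵥ (A *ᵥ ((A ^ k * A) *ᵥ v)) := by
          rw [hA2, mulVec_mulVec]
    _ = u ⬝ᵥ ((A ^ k * A) *ᵥ v) := by rw [hdl]
    _ = u ⬝ᵥ (A ^ k *ᵥ u) := by rw [← mulVec_mulVec]
  have hsmul : (θ • A) ^ (k + 2) = θ ^ (k + 2) • A ^ (k + 2) := smul_pow θ A (k + 2)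
  have hdot2 : v ⬝ᵥ (A ^ 2 *ᵥ v) = u ⬝ᵥ u := dot_herm_sq A hA v
  rw [hsmul, smul_mulVec, dotProduct_smul, smul_eq_mul, hmid, hdot2]
  have habs : |u ⬝ᵥ (A ^ k *ᵥ u)| ≤ c ^ k * (u ⬝ᵥ u) := by
    calc |u ⬝ᵥ (A ^ k *ᵥ u)| ≤ eN u * eN (A ^ k *ᵥ u) := abs_dot_le _ _
    _ ≤ eN u * (c ^ k * eN u) :=
        mul_le_mul_of_nonneg_left (eN_pow_mulVec A hc hAc k u) (eN_nonneg _)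
    _ = c ^ k * eN u ^ 2 := by ring
    _ = c ^ k * (u ⬝ᵥ u) := by rw [eN_sq]
  calc θ ^ (k + 2) * (u ⬝ᵥ (A ^ k *ᵥ u)) ≤ |θ ^ (k + 2) * (u ⬝ᵥ (A ^ k *ᵥ u))| := le_abs_self _
  _ = |θ| ^ (k + 2) * |u ⬝ᵥ (A ^ k *ᵥ u)| := by rw [abs_mul, abs_pow]
  _ ≤ |θ| ^ (k + 2) * (c ^ k * (u ⬝ᵥ u)) := mul_le_mul_of_nonneg_left habs (by positivity)
  _ = |θ| ^ (k + 2) * c ^ k * (u ⬝ᵥ u) := by ring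

/-- quadratic form as a continuous linear map -/
noncomputable def quadCLM (d : ℕ) (v : Fin d → ℝ) :
    Matrix (Fin d) (Fin d) ℝ →L[ℝ] ℝ :=
  LinearMap.toContinuousLinearMap
    { toFun := fun M => v ⬝ᵥ (M *ᵥ v)
      map_add' := fun A B => by rw [add_mulVec, dotProduct_add]
      map_smul' := fun a A => by rw [smul_mulVec, dotProduct_smul]; rfl }

@[simp] lemma quadCLM_apply (v : Fin d → ℝ) (M : Matrix (Fin d) (Fin d) ℝ) :
    quadCLM d v M = v ⬝ᵥ (M *ᵥ v) := rfl

/-- transpose as a continuous linear map -/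
noncomputable def transCLM (d : ℕ) :
    Matrix (Fin d) (Fin d) ℝ →L[ℝ] Matrix (Fin d) (Fin d) ℝ :=
  LinearMap.toContinuousLinearMap
    (Matrix.transposeLinearEquiv (Fin d) (Fin d) ℝ ℝ).toLinearMap

@[simp] lemma transCLM_apply (M : Matrix (Fin d) (Fin d) ℝ) :
    transCLM d M = Mᵀ := rfl

lemma Matrix.IsHermitian.realSmul {A : Matrix (Fin d) (Fin d) ℝ} (h : A.IsHermitian) (a : ℝ) :
    (a • A).IsHermitian := by
  have : (a • A)ᴴ = a • A := by
    rw [conjTranspose_smul, star_trivial, h.eq]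
  exact this

lemma isHermitian_of_transpose_eq {A : Matrix (Fin d) (Fin d) ℝ} (h : Aᵀ = A) :
    A.IsHermitian := by
  rwa [IsHermitian, conjTranspose_eq_transpose_of_trivial]

lemma isHermitian_integral {Ω : Type*} [MeasurableSpace Ω] (μ : Measure Ω)
    (f : Ω → Matrix (Fin d) (Fin d) ℝ) (hint : Integrable f μ)
    (h : ∀ ω, (f ω).IsHermitian) : (∫ ω, f ω ∂μ).IsHermitian := by
  apply isHermitian_of_transpose_eq
  have h1 : ∫ ω, transCLM d (f ω) ∂μ = transCLM d (∫ ω, f ω ∂μ) :=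
    (transCLM d).integral_comp_comm hint
  have h2 : (fun ω => transCLM d (f ω)) = f := by
    funext ω
    have := h ω
    rw [IsHermitian, conjTranspose_eq_transpose_of_trivial] at this
    simpa using this
  rw [h2] at h1
  simpa using h1.symm ▸ h1

lemma isHermitian_tsum (f : ℕ → Matrix (Fin d) (Fin d) ℝ) (hs : Summable f)
    (h : ∀ n, (f n).IsHermitian) : (∑' n, f n).IsHermitian := by
  apply isHermitian_of_transpose_eq
  have h1 : transCLM d (∑' n, f n) = ∑' n, transCLM d (f n) := (transCLM d).map_tsum hs
  have h2 : (fun n => transCLM d (f n)) = f := by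
    funext n
    have := h n
    rw [IsHermitian, conjTranspose_eq_transpose_of_trivial] at this
    simpa using this
  rw [h2] at h1
  simpa using h1

set_option maxHeartbeats 2000000 in
/-- For a random symmetric matrix `X` with `E X = 0` and `‖X‖ ≤ c` a.s., for every
`θ ∈ ℝ`, the matrix series `Σ_{k ≥ 2} E[(θX)ᵏ/k!] ⪯ ψ(|θ|)·E X²` in the Loewner
order, where `ψ(θ) = (e^{θc} − θc − 1)/c²`; consequently
`E exp(θX) ⪯ I + ψ(|θ|)·E X²`. -/
theorem matrix_mgf_series_bound {d : ℕ} {Ω : Type*} [MeasurableSpace Ω]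
    (μ : Measure Ω) [IsProbabilityMeasure μ]
    (X : Ω → Matrix (Fin d) (Fin d) ℝ) (hmeas : AEStronglyMeasurable X μ)
    (c : ℝ) (hc : 0 < c)
    (hsa : ∀ ω, (X ω).IsHermitian)
    (hmean : (∫ ω, X ω ∂μ) = 0)
    (hbd : ∀ᵐ ω ∂μ, ‖X ω‖ ≤ c) :
    ∀ θ : ℝ,
      ((((Real.exp (|θ| * c) - |θ| * c - 1) / c ^ 2) • ∫ ω, (X ω) ^ 2 ∂μ)
          - ∑' k : ℕ, ∫ ω, ((Nat.factorial (k + 2) : ℝ)⁻¹) • (θ • X ω) ^ (k + 2) ∂μ).PosSemidef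
        ∧
      ((1 + (((Real.exp (|θ| * c) - |θ| * c - 1) / c ^ 2) • ∫ ω, (X ω) ^ 2 ∂μ))
          - ∫ ω, NormedSpace.exp (θ • X ω) ∂μ).PosSemidef := by
  intro θ
  set t : ℝ := |θ| * c with ht
  have ht0 : 0 ≤ t := by positivity
  set F : ℕ → Ω → Matrix (Fin d) (Fin d) ℝ :=
    fun n ω => ((n.factorial : ℝ))⁻¹ • (θ • X ω) ^ n with hF
  have hFm : ∀ n : ℕ, AEStronglyMeasurable (F n) μ := by
    intro n
    exact ((hmeas.const_smul θ).pow n).const_smul (((n.factorial : ℝ))⁻¹)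
  have hone : ‖(1 : Matrix (Fin d) (Fin d) ℝ)‖ ≤ 1 := by
    rw [Matrix.cstar_norm_def, _root_.map_one]
    exact ContinuousLinearMap.norm_id_le
  have hpow : ∀ n : ℕ, ∀ᵐ ω ∂μ, ‖(θ • X ω) ^ n‖ ≤ 1 + t ^ n := by
    intro n
    filter_upwards [hbd] with ω hω
    rcases Nat.eq_zero_or_pos n with h0 | hn
    · subst h0
      simpa using hone.trans (by nlinarith)
    · have h1 : ‖θ • X ω‖ ≤ t := by
        rw [norm_smul, ht, Real.norm_eq_abs]
        exact mul_le_mul_of_nonneg_left hω (abs_nonneg θ)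
      have h2 : (0:ℝ) ≤ t ^ n := pow_nonneg ht0 n
      calc ‖(θ • X ω) ^ n‖ ≤ ‖θ • X ω‖ ^ n := norm_pow_le' _ hn
      _ ≤ t ^ n := pow_le_pow_left₀ (norm_nonneg _) h1 n
      _ ≤ 1 + t ^ n := by linarith
  have hFbd : ∀ n : ℕ, ∀ᵐ ω ∂μ, ‖F n ω‖ ≤ ((n.factorial : ℝ))⁻¹ * (1 + t ^ n) := by
    intro n
    filter_upwards [hpow n] with ω hω
    have hfac : (0:ℝ) ≤ ((n.factorial : ℝ))⁻¹ := by positivity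
    calc ‖F n ω‖ = ((n.factorial : ℝ))⁻¹ * ‖(θ • X ω) ^ n‖ := by
          rw [hF]; simp [norm_smul, abs_of_nonneg hfac]
    _ ≤ ((n.factorial : ℝ))⁻¹ * (1 + t ^ n) := mul_le_mul_of_nonneg_left hω hfac
  have hFint : ∀ n, Integrable (F n) μ := fun n =>
    Integrable.mono' (integrable_const _) (hFm n) (hFbd n)
  have hnormF : ∀ n, ∫ ω, ‖F n ω‖ ∂μ ≤ ((n.factorial : ℝ))⁻¹ * (1 + t ^ n) := by
    intro n
    have := integral_mono_ae (hFint n).norm (integrable_const _) (hFbd n)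
    simpa [measure_univ] using this
  have hsumB : Summable (fun n : ℕ => ((n.factorial : ℝ))⁻¹ * (1 + t ^ n)) := by
    have h1 := Real.summable_pow_div_factorial 1
    have h2 := Real.summable_pow_div_factorial t
    refine ((h1.add h2).congr fun n => ?_)
    have : ((n.factorial : ℝ)) ≠ 0 := Nat.cast_ne_zero.2 n.factorial_ne_zero
    field_simp
    simp
  have hsumNormInt : Summable (fun n => ∫ ω, ‖F n ω‖ ∂μ) :=
    Summable.of_nonneg_of_le (fun n => integral_nonneg fun ω => norm_nonneg _) hnormF hsumB
  have hswap : ∑' n, ∫ ω, F n ω ∂μ = ∫ ω, ∑' n, F n ω ∂μ :=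
    integral_tsum_of_summable_integral_norm hFint hsumNormInt
  have hSumIntF : Summable (fun n => ∫ ω, F n ω ∂μ) := by
    apply Summable.of_norm
    exact Summable.of_nonneg_of_le (fun n => norm_nonneg _)
      (fun n => (norm_integral_le_integral_norm _).trans (hnormF n)) hsumB
  have hIsm : Summable (fun k => ∫ ω, F (k + 2) ω ∂μ) :=
    (summable_nat_add_iff 2).2 hSumIntF
  have hX2int : Integrable (fun ω => (X ω) ^ 2) μ := by
    refine Integrable.mono' (integrable_const (c ^ 2)) (hmeas.pow 2) ?_
    filter_upwards [hbd] with ω hω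
    calc ‖(X ω) ^ 2‖ ≤ ‖X ω‖ ^ 2 := norm_pow_le' _ two_pos
    _ ≤ c ^ 2 := pow_le_pow_left₀ (norm_nonneg _) hω 2
  set ψ : ℝ := (Real.exp t - t - 1) / c ^ 2 with hψ
  set Q : Matrix (Fin d) (Fin d) ℝ := ∫ ω, (X ω) ^ 2 ∂μ with hQ
  set S : Matrix (Fin d) (Fin d) ℝ := ∑' k, ∫ ω, F (k + 2) ω ∂μ with hS
  have hFherm : ∀ n ω, (F n ω).IsHermitian := fun n ω =>
    (((hsa ω).realSmul θ).pow n).realSmul _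
  have hQherm : Q.IsHermitian :=
    isHermitian_integral μ _ hX2int fun ω => (hsa ω).pow 2
  have hIherm : ∀ k : ℕ, (∫ ω, F (k + 2) ω ∂μ).IsHermitian := fun k =>
    isHermitian_integral μ _ (hFint (k + 2)) fun ω => hFherm (k + 2) ω
  have hSherm : S.IsHermitian := isHermitian_tsum _ hIsm hIherm
  have hMherm : (ψ • Q - S).IsHermitian := (hQherm.realSmul ψ).sub hSherm
  -- scalar series
  have hshift2 : Summable (fun k : ℕ => t ^ (k + 2) / (((k + 2).factorial : ℝ))) :=
    (summable_nat_add_iff 2).2 (Real.summable_pow_div_factorial t)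
  have hscalar : ∑' k : ℕ, t ^ (k + 2) / (((k + 2).factorial : ℝ)) = Real.exp t - 1 - t := by
    have hexp : Real.exp t = ∑' n : ℕ, t ^ n / ((n.factorial : ℝ)) := by
      rw [Real.exp_eq_exp_ℝ, NormedSpace.exp_eq_tsum_div]
    have hs0 := Real.summable_pow_div_factorial t
    have hs1 : Summable (fun n : ℕ => t ^ (n + 1) / (((n + 1).factorial : ℝ))) :=
      (summable_nat_add_iff 1).2 hs0
    have e1 : ∑' n : ℕ, t ^ n / ((n.factorial : ℝ))
        = 1 + ∑' n : ℕ, t ^ (n + 1) / (((n + 1).factorial : ℝ)) := by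
      rw [Summable.tsum_eq_zero_add hs0]; norm_num
    have e2 : ∑' n : ℕ, t ^ (n + 1) / (((n + 1).factorial : ℝ))
        = t + ∑' k : ℕ, t ^ (k + 2) / (((k + 2).factorial : ℝ)) := by
      rw [Summable.tsum_eq_zero_add hs1]
      norm_num
    rw [hexp, e1, e2]; ring
  have hacoef : ∀ k : ℕ, (((k + 2).factorial : ℝ))⁻¹ * (|θ| ^ (k + 2) * c ^ k)
      = (t ^ (k + 2) / (((k + 2).factorial : ℝ))) / c ^ 2 := by
    intro k
    have hfac : ((k + 2).factorial : ℝ) ≠ 0 := Nat.cast_ne_zero.2 (k + 2).factorial_ne_zero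
    rw [ht]
    field_simp
    ring
  -- quadratic form inequality
  have hquad : ∀ v : Fin d → ℝ, 0 ≤ v ⬝ᵥ ((ψ • Q - S) *ᵥ v) := by
    intro v
    set φ := quadCLM d v with hφ
    have hCq : φ Q = ∫ ω, φ ((X ω) ^ 2) ∂μ := (φ.integral_comp_comm hX2int).symm
    have hterm : ∀ k : ℕ, ∫ ω, φ (F (k + 2) ω) ∂μ
        ≤ (((k + 2).factorial : ℝ))⁻¹ * (|θ| ^ (k + 2) * c ^ k) * ∫ ω, φ ((X ω) ^ 2) ∂μ := by
      intro k
      have hint1 : Integrable (fun ω => φ (F (k + 2) ω)) μ :=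
        φ.integrable_comp (hFint (k + 2))
      have hint2 : Integrable
          (fun ω => (((k + 2).factorial : ℝ))⁻¹ * (|θ| ^ (k + 2) * c ^ k) * φ ((X ω) ^ 2)) μ :=
        (φ.integrable_comp hX2int).const_mul _
      have hmono := integral_mono_ae hint1 hint2 ?_
      · calc ∫ ω, φ (F (k + 2) ω) ∂μ
            ≤ ∫ ω, (((k + 2).factorial : ℝ))⁻¹ * (|θ| ^ (k + 2) * c ^ k) * φ ((X ω) ^ 2) ∂μ :=
              hmono
        _ = (((k + 2).factorial : ℝ))⁻¹ * (|θ| ^ (k + 2) * c ^ k) * ∫ ω, φ ((X ω) ^ 2) ∂μ :=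
              integral_const_mul _ _
      · filter_upwards [hbd] with ω hω
        have hkey := qf_pow_bound (X ω) (hsa ω) hc.le hω θ k v
        have hfac : (0:ℝ) ≤ (((k + 2).factorial : ℝ))⁻¹ := by positivity
        have : φ (F (k + 2) ω)
            = (((k + 2).factorial : ℝ))⁻¹ * (v ⬝ᵥ ((θ • X ω) ^ (k + 2) *ᵥ v)) := by
          rw [hF, hφ]
          simp [smul_mulVec, dotProduct_smul]
        rw [this]
        have h2 : φ ((X ω) ^ 2) = v ⬝ᵥ ((X ω) ^ 2 *ᵥ v) := rfl
        rw [h2]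
        calc (((k + 2).factorial : ℝ))⁻¹ * (v ⬝ᵥ ((θ • X ω) ^ (k + 2) *ᵥ v))
            ≤ (((k + 2).factorial : ℝ))⁻¹ * (|θ| ^ (k + 2) * c ^ k * (v ⬝ᵥ ((X ω) ^ 2 *ᵥ v))) :=
              mul_le_mul_of_nonneg_left hkey hfac
        _ = (((k + 2).factorial : ℝ))⁻¹ * (|θ| ^ (k + 2) * c ^ k) * (v ⬝ᵥ ((X ω) ^ 2 *ᵥ v)) := by
              ring
    have hsumL : Summable (fun k => ∫ ω, φ (F (k + 2) ω) ∂μ) := by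
      have heq : (fun k => ∫ ω, φ (F (k + 2) ω) ∂μ)
          = fun k => φ (∫ ω, F (k + 2) ω ∂μ) :=
        funext fun k => φ.integral_comp_comm (hFint (k + 2))
      rw [heq]
      exact hIsm.mapL φ
    have hsumR : Summable (fun k : ℕ =>
        (((k + 2).factorial : ℝ))⁻¹ * (|θ| ^ (k + 2) * c ^ k) * ∫ ω, φ ((X ω) ^ 2) ∂μ) := by
      apply Summable.mul_right
      exact (hshift2.div_const (c ^ 2)).congr fun k => (hacoef k).symm
    have htsum_le : ∑' k, ∫ ω, φ (F (k + 2) ω) ∂μ ≤ ψ * ∫ ω, φ ((X ω) ^ 2) ∂μ := by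
      have h1 := Summable.tsum_le_tsum hterm hsumL hsumR
      have h2 : ∑' k : ℕ,
          (((k + 2).factorial : ℝ))⁻¹ * (|θ| ^ (k + 2) * c ^ k) * ∫ ω, φ ((X ω) ^ 2) ∂μ
          = ψ * ∫ ω, φ ((X ω) ^ 2) ∂μ := by
        rw [tsum_mul_right]
        congr 1
        have : ∑' k : ℕ, (((k + 2).factorial : ℝ))⁻¹ * (|θ| ^ (k + 2) * c ^ k)
            = ∑' k : ℕ, (t ^ (k + 2) / (((k + 2).factorial : ℝ))) / c ^ 2 :=
          tsum_congr fun k => hacoef k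
        rw [this, tsum_div_const, hscalar, hψ]
        ring
      rw [h2] at h1
      exact h1
    have hφS : φ S = ∑' k, ∫ ω, φ (F (k + 2) ω) ∂μ := by
      rw [hS, φ.map_tsum hIsm]
      exact tsum_congr fun k => (φ.integral_comp_comm (hFint (k + 2))).symm
    have hexpand : v ⬝ᵥ ((ψ • Q - S) *ᵥ v) = ψ * φ Q - φ S := by
      rw [sub_mulVec, dotProduct_sub, smul_mulVec, dotProduct_smul, smul_eq_mul]
      rfl
    rw [hexpand, hCq]
    linarith [htsum_le, hφS ▸ htsum_le]
  have key : (ψ • Q - S).PosSemidef := by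
    refine PosSemidef.of_dotProduct_mulVec_nonneg hMherm fun v => ?_
    simpa using hquad v
  -- second part
  have h0 : ∫ ω, F 0 ω ∂μ = 1 := by
    have he : F 0 = fun _ : Ω => (1 : Matrix (Fin d) (Fin d) ℝ) := by
      funext ω; rw [hF]; simp
    rw [he, integral_const, probReal_univ, one_smul]
  have h1 : ∫ ω, F 1 ω ∂μ = 0 := by
    have he : F 1 = fun ω => θ • X ω := by
      funext ω; rw [hF]; simp
    rw [he, integral_smul, hmean, smul_zero]
  have hsplit : ∑' n, ∫ ω, F n ω ∂μ = 1 + S := by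
    rw [Summable.tsum_eq_zero_add hSumIntF, Summable.tsum_eq_zero_add ((summable_nat_add_iff 1).2 hSumIntF),
      h0, h1, zero_add, hS]
  have hexpint : ∫ ω, NormedSpace.exp (θ • X ω) ∂μ = 1 + S := by
    rw [← hsplit, hswap]
    congr 1
    funext ω
    rw [NormedSpace.exp_eq_tsum ℝ]
  constructor
  · exact key
  · have heq : (1 + ψ • Q) - ∫ ω, NormedSpace.exp (θ • X ω) ∂μ = ψ • Q - S := by
      rw [hexpint]
      abel
    rw [heq]
    exact key
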